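/- arXiv:1503.02553 — 2 statements merged into one kernel-verified Lean document; each statement's English description precedes it below -/
import Mathlib

section
/- Let H₁, H₂ be finite-dimensional real inner product spaces, A₁ SPD on H₁, B : H₁ → H₂ linear, and let Q₁ (SPD on H₁) satisfy ‖I - Q₁A₁‖_{A₁} ≤ ρ with 0 ≤ ρ < 1. Then for all x₁ ∈ H₁ and x₂ ∈ H₂: ⟨A₁ x₁, x₁⟩ - ⟨Q₁A₁ x₁, B*x₂⟩ + ⟨Q₁ B*x₂, B*x₂⟩ ≥ γ₀ (‖x₁‖²_{A₁} + ‖B*x₂‖²_{Q₁}), where γ₀ = 1 - (1+ρ)/2 > 0 and ‖v‖²_{Q₁} = ⟨Q₁v, v⟩. -/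
open scoped RealInnerProductSpace

lemma cs_aux {H : Type*} [NormedAddCommGroup H] [InnerProductSpace ℝ H]
    (T : H →ₗ[ℝ] H) (hs : ∀ x y : H, ⟪T x, y⟫ = ⟪x, T y⟫)
    (hnn : ∀ x : H, 0 ≤ ⟪T x, x⟫) (x y : H) :
    ⟪T x, y⟫ ^ 2 ≤ ⟪T x, x⟫ * ⟪T y, y⟫ := by
  have h : ∀ t : ℝ, 0 ≤ ⟪T y, y⟫ * (t * t) + (2 * ⟪T x, y⟫) * t + ⟪T x, x⟫ := by
    intro t
    have h0 := hnn (x + t • y)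
    have hT : T (x + t • y) = T x + t • T y := by simp [map_add, map_smul]
    rw [hT] at h0
    have hexp : ⟪T x + t • T y, x + t • y⟫
        = ⟪T x, x⟫ + t * ⟪T x, y⟫ + t * ⟪T y, x⟫ + t ^ 2 * ⟪T y, y⟫ := by
      simp [inner_add_add_self, inner_add_left, inner_add_right, inner_smul_left,
        inner_smul_right, real_inner_smul_left, real_inner_smul_right]
      ring
    have hyx : ⟪T y, x⟫ = ⟪T x, y⟫ := by
      rw [hs y x, real_inner_comm]
    rw [hexp, hyx] at h0
    nlinarith [h0]
  have hd := discrim_le_zero (a := ⟪T y, y⟫) (b := 2 * ⟪T x, y⟫) (c := ⟪T x, x⟫) h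
  rw [discrim] at hd
  nlinarith [hd]

/-- Core estimate of the inexact block triangular preconditioner analysis:
`⟨A₁x₁, x₁⟩ - ⟨Q₁A₁x₁, B*x₂⟩ + ⟨Q₁B*x₂, B*x₂⟩ ≥ γ₀(‖x₁‖²_{A₁} + ‖B*x₂‖²_{Q₁})`
with `γ₀ = 1 - (1+ρ)/2`. -/
theorem stmt8 {H₁ H₂ : Type*}
    [NormedAddCommGroup H₁] [InnerProductSpace ℝ H₁] [FiniteDimensional ℝ H₁]
    [NormedAddCommGroup H₂] [InnerProductSpace ℝ H₂] [FiniteDimensional ℝ H₂]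
    (A₁ Q₁ : H₁ →ₗ[ℝ] H₁) (B : H₁ →ₗ[ℝ] H₂) (ρ : ℝ)
    (hA₁symm : ∀ x y : H₁, ⟪A₁ x, y⟫ = ⟪x, A₁ y⟫)
    (hA₁pos : ∀ x : H₁, x ≠ 0 → 0 < ⟪A₁ x, x⟫)
    (hQsymm : ∀ x y : H₁, ⟪Q₁ x, y⟫ = ⟪x, Q₁ y⟫)
    (hQpos : ∀ x : H₁, x ≠ 0 → 0 < ⟪Q₁ x, x⟫)
    (hρ0 : 0 ≤ ρ) (hρ1 : ρ < 1)
    (hbound : ∀ x : H₁, ⟪A₁ (x - Q₁ (A₁ x)), x - Q₁ (A₁ x)⟫ ≤ ρ^2 * ⟪A₁ x, x⟫) :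
    ∀ (x₁ : H₁) (x₂ : H₂),
      ⟪A₁ x₁, x₁⟫ - ⟪Q₁ (A₁ x₁), (LinearMap.adjoint B) x₂⟫
        + ⟪Q₁ ((LinearMap.adjoint B) x₂), (LinearMap.adjoint B) x₂⟫
      ≥ (1 - (1 + ρ)/2) *
        (⟪A₁ x₁, x₁⟫ + ⟪Q₁ ((LinearMap.adjoint B) x₂), (LinearMap.adjoint B) x₂⟫) := by
  have hAnn : ∀ x : H₁, 0 ≤ ⟪A₁ x, x⟫ := by
    intro x
    by_cases hx : x = 0
    · simp [hx]
    · exact (hA₁pos x hx).le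
  have hQnn : ∀ x : H₁, 0 ≤ ⟪Q₁ x, x⟫ := by
    intro x
    by_cases hx : x = 0
    · simp [hx]
    · exact (hQpos x hx).le
  intro x₁ x₂
  set v := (LinearMap.adjoint B) x₂ with hv
  set a := ⟪A₁ x₁, x₁⟫ with ha
  set c := ⟪Q₁ v, v⟫ with hc
  set p := ⟪Q₁ (A₁ x₁), v⟫ with hp
  have han : 0 ≤ a := hAnn x₁
  have hcn : 0 ≤ c := hQnn v
  -- Step 1: ⟪Q₁ (A₁ x₁), A₁ x₁⟫ ≤ (1+ρ) * a
  have h1 : ⟪Q₁ (A₁ x₁), A₁ x₁⟫ ≤ (1 + ρ) * a := by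
    set w := x₁ - Q₁ (A₁ x₁) with hw
    have hwcs : ⟪A₁ w, x₁⟫ ^ 2 ≤ ⟪A₁ w, w⟫ * a :=
      cs_aux A₁ hA₁symm hAnn w x₁
    have hb := hbound x₁
    have hww : 0 ≤ ⟪A₁ w, w⟫ := hAnn w
    have hwle : ⟪A₁ w, x₁⟫ ^ 2 ≤ ρ ^ 2 * a ^ 2 := by
      calc ⟪A₁ w, x₁⟫ ^ 2 ≤ ⟪A₁ w, w⟫ * a := hwcs
        _ ≤ (ρ ^ 2 * a) * a := by nlinarith
        _ = ρ ^ 2 * a ^ 2 := by ring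
    have hident : ⟪Q₁ (A₁ x₁), A₁ x₁⟫ = a - ⟪A₁ w, x₁⟫ := by
      have : ⟪A₁ w, x₁⟫ = ⟪A₁ x₁, x₁⟫ - ⟪A₁ (Q₁ (A₁ x₁)), x₁⟫ := by
        rw [hw, map_sub, inner_sub_left]
      rw [this, hA₁symm (Q₁ (A₁ x₁)) x₁, real_inner_comm]
      ring
    have : -(ρ * a) ≤ ⟪A₁ w, x₁⟫ := by nlinarith [hwle, mul_nonneg hρ0 han]
    rw [hident]; linarith
  -- Step 2: Cauchy-Schwarz for Q₁
  have h2 : p ^ 2 ≤ ⟪Q₁ (A₁ x₁), A₁ x₁⟫ * c := cs_aux Q₁ hQsymm hQnn (A₁ x₁) v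
  have h3 : p ^ 2 ≤ (1 + ρ) * a * c := by
    calc p ^ 2 ≤ ⟪Q₁ (A₁ x₁), A₁ x₁⟫ * c := h2
      _ ≤ (1 + ρ) * a * c := by nlinarith [hQnn (A₁ x₁)]
  -- Finish
  have hX : 0 ≤ (1 + ρ) * a + c := by nlinarith [mul_nonneg hρ0 han]
  have h4 : 4 * p ^ 2 ≤ ((1 + ρ) * a + c) ^ 2 := by
    nlinarith [h3, sq_nonneg ((1 + ρ) * a - c)]
  have h5 : 2 * p ≤ (1 + ρ) * a + c := by nlinarith [h4, hX]
  nlinarith [h5, mul_nonneg hρ0 hcn]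
end

section
/- Let A₁ be SPD on a finite-dimensional inner product space H₁ and Q₁ SPD with ‖I - Q₁A₁‖_{A₁} ≤ ρ, 0 ≤ ρ < 1. Then for any u ∈ H₁ and w ∈ H₁: |⟨Q₁A₁u, w⟩| ≤ (1+ρ)‖u‖_{A₁}‖w‖_{Q₁}, where ‖w‖²_{Q₁} = ⟨Q₁w, w⟩ and ‖u‖²_{A₁} = ⟨A₁u, u⟩. -/
open scoped RealInnerProductSpace

/-- Cauchy–Schwarz for a symmetric positive-semidefinite operator. -/
lemma cs_psd {H : Type*} [NormedAddCommGroup H] [InnerProductSpace ℝ H]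
    (B : H →ₗ[ℝ] H) (hs : ∀ x y : H, ⟪B x, y⟫ = ⟪x, B y⟫)
    (hp : ∀ x : H, 0 ≤ ⟪B x, x⟫) (x y : H) :
    ⟪B x, y⟫ ^ 2 ≤ ⟪B x, x⟫ * ⟪B y, y⟫ := by
  have hcomm : ⟪B y, x⟫ = ⟪B x, y⟫ := by
    rw [hs y x, real_inner_comm]
  have key : ∀ t : ℝ, 0 ≤ ⟪B y, y⟫ * (t * t) + (2 * ⟪B x, y⟫) * t + ⟪B x, x⟫ := by
    intro t
    have h := hp (x + t • y)
    simp only [map_add, map_smul, inner_add_left, inner_add_right, inner_smul_left,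
      inner_smul_right, conj_trivial] at h
    rw [hcomm] at h; nlinarith [h]
  have hd := discrim_le_zero key
  simp only [discrim] at hd
  nlinarith [hd]

/-- If `‖I - Q₁A₁‖_{A₁} ≤ ρ` with `0 ≤ ρ < 1`, then
`|⟨Q₁A₁u, w⟩| ≤ (1+ρ)‖u‖_{A₁}‖w‖_{Q₁}`. -/
theorem stmt15 {H₁ : Type*} [NormedAddCommGroup H₁] [InnerProductSpace ℝ H₁]
    [FiniteDimensional ℝ H₁]
    (A₁ Q₁ : H₁ →ₗ[ℝ] H₁) (ρ : ℝ)
    (hAsymm : ∀ x y : H₁, ⟪A₁ x, y⟫ = ⟪x, A₁ y⟫)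
    (hApos : ∀ x : H₁, x ≠ 0 → 0 < ⟪A₁ x, x⟫)
    (hQsymm : ∀ x y : H₁, ⟪Q₁ x, y⟫ = ⟪x, Q₁ y⟫)
    (hQpos : ∀ x : H₁, x ≠ 0 → 0 < ⟪Q₁ x, x⟫)
    (hρ0 : 0 ≤ ρ) (hρ1 : ρ < 1)
    (hbound : ∀ x : H₁, ⟪A₁ (x - Q₁ (A₁ x)), x - Q₁ (A₁ x)⟫ ≤ ρ^2 * ⟪A₁ x, x⟫) :
    ∀ u w : H₁,
      |⟪Q₁ (A₁ u), w⟫| ≤ (1 + ρ) * Real.sqrt ⟪A₁ u, u⟫ * Real.sqrt ⟪Q₁ w, w⟫ := by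
  intro u w
  have hApos' : ∀ x : H₁, 0 ≤ ⟪A₁ x, x⟫ := by
    intro x
    rcases eq_or_ne x 0 with rfl | hx
    · simp
    · exact (hApos x hx).le
  have hQpos' : ∀ x : H₁, 0 ≤ ⟪Q₁ x, x⟫ := by
    intro x
    rcases eq_or_ne x 0 with rfl | hx
    · simp
    · exact (hQpos x hx).le
  set a := ⟪A₁ u, u⟫ with ha
  set q := ⟪Q₁ w, w⟫ with hq
  have ha0 : 0 ≤ a := hApos' u
  have hq0 : 0 ≤ q := hQpos' w
  set z := Q₁ (A₁ u) with hz
  -- step 1: ⟪Q₁ (A₁ u), A₁ u⟫ ≤ (1+ρ) a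
  have hstep : ⟪Q₁ (A₁ u), A₁ u⟫ ≤ (1 + ρ) * a := by
    have h1 : ⟪Q₁ (A₁ u), A₁ u⟫ = ⟪A₁ u, z⟫ := real_inner_comm _ _
    have h2 : ⟪A₁ u, z⟫ = a - ⟪A₁ u, u - z⟫ := by
      rw [inner_sub_right]; ring
    -- |⟪A₁ u, u - z⟫| ≤ sqrt(a * ⟪A₁(u-z), u-z⟫) ≤ ρ a
    have hcs := cs_psd A₁ hAsymm hApos' u (u - z)
    have hb := hbound u
    have hAuz : ⟪A₁ u, u - z⟫ ^ 2 ≤ a * (ρ ^ 2 * a) := by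
      calc ⟪A₁ u, u - z⟫ ^ 2 ≤ a * ⟪A₁ (u - z), u - z⟫ := hcs
        _ ≤ a * (ρ ^ 2 * a) := by
            apply mul_le_mul_of_nonneg_left _ ha0
            exact hb
    have habs : ⟪A₁ u, u - z⟫ ≥ -(ρ * a) := by
      nlinarith [hAuz, mul_nonneg hρ0 ha0, sq_nonneg (⟪A₁ u, u - z⟫ + ρ * a)]
    rw [h1, h2]
    nlinarith [habs]
  -- step 2: Cauchy–Schwarz in Q₁
  have hcsQ := cs_psd Q₁ hQsymm hQpos' (A₁ u) w
  have hQvv : 0 ≤ ⟪Q₁ (A₁ u), A₁ u⟫ := hQpos' (A₁ u)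
  have hsq : ⟪Q₁ (A₁ u), w⟫ ^ 2 ≤ ((1 + ρ) * Real.sqrt a * Real.sqrt q) ^ 2 := by
    have h1ρ : (1 : ℝ) ≤ 1 + ρ := by linarith
    have : ⟪Q₁ (A₁ u), w⟫ ^ 2 ≤ ((1 + ρ) * a) * q := by
      calc ⟪Q₁ (A₁ u), w⟫ ^ 2 ≤ ⟪Q₁ (A₁ u), A₁ u⟫ * q := hcsQ
        _ ≤ ((1 + ρ) * a) * q := mul_le_mul_of_nonneg_right hstep hq0
    calc ⟪Q₁ (A₁ u), w⟫ ^ 2 ≤ ((1 + ρ) * a) * q := this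
      _ ≤ ((1 + ρ) ^ 2 * a) * q := by nlinarith [mul_nonneg ha0 hq0]
      _ = ((1 + ρ) * Real.sqrt a * Real.sqrt q) ^ 2 := by
          rw [mul_pow, mul_pow, Real.sq_sqrt ha0, Real.sq_sqrt hq0]
  have hrhs : 0 ≤ (1 + ρ) * Real.sqrt a * Real.sqrt q := by
    apply mul_nonneg (mul_nonneg (by linarith) (Real.sqrt_nonneg _)) (Real.sqrt_nonneg _)
  exact abs_le.mpr (abs_le_of_sq_le_sq' hsq hrhs)
end
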